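/- Let N ∈ ℕ, α_1, ..., α_N ∈ ℂ* with partial sums A_j = α_1 + ... + α_j satisfying 1 - A_k ≠ 0 for all 0 ≤ k ≤ N. Define G(α)_j = α_{N+1-j}(1 - A_N)/((1 - A_{N+1-j})(1 - A_{N-j})). Then G is an involution: applying G twice returns the original parameters, G(G(α))_j = α_j for all j. -/

import Mathlib

theorem stmt_13 (N : ℕ) (α : ℕ → ℂ)
    (hα : ∀ j, 1 ≤ j → j ≤ N → α j ≠ 0)
    (hA : ∀ k ≤ N, 1 - (∑ i ∈ Finset.Icc 1 k, α i) ≠ 0) :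
    let G : (ℕ → ℂ) → ℕ → ℂ := fun β j =>
      let Aβ : ℕ → ℂ := fun m => ∑ i ∈ Finset.Icc 1 m, β i
      β (N + 1 - j) * (1 - Aβ N) / ((1 - Aβ (N + 1 - j)) * (1 - Aβ (N - j)))
    ∀ j, 1 ≤ j → j ≤ N → G (G α) j = α j := by
  intro G
  set A : ℕ → ℂ := fun m => ∑ i ∈ Finset.Icc 1 m, α i with hAdef
  have hGα : ∀ j, G α j = α (N + 1 - j) * (1 - A N) /
      ((1 - A (N + 1 - j)) * (1 - A (N - j))) := fun j => rfl
  have hstep : ∀ k, A (k + 1) = A k + α (k + 1) := by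
    intro k
    simp [hAdef, Finset.sum_Icc_succ_top (Nat.le_add_left 1 k)]
  -- telescoping identity
  have key : ∀ m, m ≤ N → 1 - (∑ i ∈ Finset.Icc 1 m, G α i) =
      (1 - A N) / (1 - A (N - m)) := by
    intro m
    induction m with
    | zero =>
      intro _
      simp [div_self (show (1 - A N) ≠ 0 from hA N le_rfl)]
    | succ m ih =>
      intro hm
      have hm' : m ≤ N := Nat.le_of_succ_le hm
      have h1 : N + 1 - (m + 1) = N - m := by omega
      have h2 : N - (m + 1) = N - m - 1 := by omega
      have h3 : N - m = (N - m - 1) + 1 := by omega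
      rw [Finset.sum_Icc_succ_top (Nat.le_add_left 1 m), hGα (m + 1), h1, h2]
      rw [sub_add_eq_sub_sub, ih hm']
      have hαeq : α (N - m) = A (N - m) - A (N - m - 1) := by
        have h4 := hstep (N - m - 1)
        rw [← h3] at h4
        rw [h4]; ring
      have d1 : (1 - A (N - m)) ≠ 0 := hA _ (by omega)
      have d2 : (1 - A (N - m - 1)) ≠ 0 := hA _ (by omega)
      rw [hαeq]
      field_simp
      ring
  intro j hj1 hjN
  have hGGj : G (G α) j = G α (N + 1 - j) * (1 - ∑ i ∈ Finset.Icc 1 N, G α i) /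
      ((1 - ∑ i ∈ Finset.Icc 1 (N + 1 - j), G α i) *
       (1 - ∑ i ∈ Finset.Icc 1 (N - j), G α i)) := rfl
  have e1 : N + 1 - (N + 1 - j) = j := by omega
  have e2 : N - (N + 1 - j) = j - 1 := by omega
  have e3 : N - N = 0 := by omega
  have e4 : N - (N + 1 - j) = j - 1 := by omega
  have e5 : N - (N - j) = j := by omega
  rw [hGGj, key N le_rfl, key (N + 1 - j) (by omega), key (N - j) (by omega),
    hGα (N + 1 - j), e1, e2, e3, e5]
  have hA0 : A 0 = 0 := by simp [hAdef]
  rw [hA0]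
  have dN : (1 - A N) ≠ 0 := hA N le_rfl
  have dj : (1 - A j) ≠ 0 := hA j hjN
  have dj1 : (1 - A (j - 1)) ≠ 0 := hA (j - 1) (by omega)
  field_simp
  ring
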